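/- Let q be a prime power, let d be an even positive integer, let k = d/2 + 1, and let α > 0 be a real number. Then α² · |{z ∈ F_q^{d+1} : |Z^{-1}(z)| ≤ q - α √q d^k}| ≤ q^{d+1}, where |Z^{-1}(z)| denotes the number of pairs (x,y) ∈ F_q^k × F_q^k with Z(x,y) = z and the inequality |Z^{-1}(z)| ≤ q - α √q d^k is read in the real numbers. -/

import Mathlib

open Finset
open Finset

/-- Vandermonde nondegeneracy over a Finset: if `x` is injective on `s`,
`s.card ≤ dd+1`, and all moments up to `dd` vanish, then the weights vanish. -/
lemma vand_finset {F : Type*} [Field F] {ι : Type*} [DecidableEq ι] (dd : ℕ)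
    (s : Finset ι) (x c : ι → F) (hcard : s.card ≤ dd + 1)
    (hinj : Set.InjOn x s)
    (hmom : ∀ j : Fin (dd + 1), ∑ i ∈ s, c i * x i ^ (j : ℕ) = 0) :
    ∀ i ∈ s, c i = 0 := by
  classical
  set m := s.card with hm
  let e : Fin m ≃ s := s.equivFin.symm
  let t : Fin m → F := fun a => x (e a)
  have tinj : Function.Injective t := by
    intro a b h
    exact e.injective (Subtype.ext (hinj (e a).2 (e b).2 h))
  have hsum : ∀ j : Fin m, ∑ b : Fin m, (fun b => c (e b)) b * t b ^ (j : ℕ) = 0 := by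
    intro j
    have hj : (j : ℕ) < dd + 1 := lt_of_lt_of_le j.2 hcard
    have := hmom ⟨j, hj⟩
    rw [← Finset.sum_coe_sort s (fun i => c i * x i ^ (j : ℕ))] at this
    rw [← e.sum_comp (fun i : s => c i * x i ^ (j : ℕ))] at this
    exact this
  have := Matrix.eq_zero_of_forall_pow_sum_mul_pow_eq_zero tinj hsum
  intro i hi
  have : c (e (e.symm ⟨i, hi⟩)) = 0 := congrFun this (e.symm ⟨i, hi⟩)
  simpa using this

section Lead
variable {n : ℕ} {F : Type*} [DecidableEq F]

/-- the first index having the same value as `i` -/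
noncomputable def lead (X : Fin n → F) (i : Fin n) : Fin n :=
  (univ.filter (fun j => X j = X i)).min' ⟨i, by simp⟩

variable (X : Fin n → F)

lemma X_lead (i : Fin n) : X (lead X i) = X i := by
  have := Finset.min'_mem (univ.filter (fun j => X j = X i)) ⟨i, by simp⟩
  simpa [lead] using this

lemma lead_congr {i j : Fin n} (h : X i = X j) : lead X i = lead X j := by
  unfold lead
  congr 1
  · rw [h]

lemma lead_lead (i : Fin n) : lead X (lead X i) = lead X i := by
  have h1 := lead_congr X (X_lead X i)
  rw [h1]

lemma lead_le {i j : Fin n} (h : X j = X i) : lead X i ≤ j :=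
  Finset.min'_le _ _ (by simp [h])

lemma lead_self_eq (i : Fin n) : lead X (lead X i) = lead X i := lead_lead X i

/-- number of distinct values occurring before the leader of `i` -/
noncomputable def rr (X : Fin n → F) (i : Fin n) : ℕ :=
  ((univ.filter (fun j => j < lead X i)).image X).card

lemma rr_congr {i j : Fin n} (h : X i = X j) : rr X i = rr X j := by
  unfold rr; rw [lead_congr X h]

lemma Xi_not_mem_early (i : Fin n) :
    X i ∉ (univ.filter (fun j => j < lead X i)).image X := by
  intro hmem
  obtain ⟨m, hm, hXm⟩ := Finset.mem_image.mp hmem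
  have hmlt : m < lead X i := (Finset.mem_filter.mp hm).2
  exact absurd (lead_le X hXm) (not_le.mpr hmlt)

lemma rr_lt_of_lead_lt {i j : Fin n} (h : lead X i < lead X j) : rr X i < rr X j := by
  have hsub : insert (X i) ((univ.filter (fun j' => j' < lead X i)).image X)
      ⊆ (univ.filter (fun j' => j' < lead X j)).image X := by
    intro v hv
    rcases Finset.mem_insert.mp hv with hv | hv
    · subst hv
      exact Finset.mem_image.mpr ⟨lead X i, by simp [h], X_lead X i⟩
    · obtain ⟨m, hm, hXm⟩ := Finset.mem_image.mp hv
      have : m < lead X i := (Finset.mem_filter.mp hm).2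
      exact Finset.mem_image.mpr ⟨m, by simp [lt_trans this h], hXm⟩
  calc rr X i < rr X i + 1 := Nat.lt_succ_self _
    _ = (insert (X i) ((univ.filter (fun j' => j' < lead X i)).image X)).card := by
        rw [Finset.card_insert_of_notMem (Xi_not_mem_early X i)]; rfl
    _ ≤ _ := Finset.card_le_card hsub

lemma rr_eq_iff (i j : Fin n) : rr X i = rr X j ↔ X i = X j := by
  constructor
  · intro h
    by_contra hne
    have hlead : lead X i ≠ lead X j := by
      intro he
      exact hne ((X_lead X i).symm.trans (he ▸ (X_lead X j)))
    rcases lt_or_gt_of_ne hlead with hlt | hlt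
    · exact absurd h (Nat.ne_of_lt (rr_lt_of_lead_lt X hlt))
    · exact absurd h.symm (Nat.ne_of_lt (rr_lt_of_lead_lt X hlt))
  · exact rr_congr X

lemma rr_lt_card_image (i : Fin n) : rr X i < (univ.image X).card := by
  have hsub : insert (X i) ((univ.filter (fun j => j < lead X i)).image X)
      ⊆ univ.image X := by
    intro v hv
    rcases Finset.mem_insert.mp hv with hv | hv
    · subst hv; exact Finset.mem_image.mpr ⟨i, by simp, rfl⟩
    · exact Finset.image_subset_image (Finset.filter_subset _ _) hv
  calc rr X i < rr X i + 1 := Nat.lt_succ_self _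
    _ = _ := (Finset.card_insert_of_notMem (Xi_not_mem_early X i)).symm
    _ ≤ _ := Finset.card_le_card hsub

lemma lead_eq_min'_rr (i : Fin n) :
    lead X i = (univ.filter (fun j => rr X j = rr X i)).min' ⟨i, by simp⟩ := by
  unfold lead
  congr 1
  ext j
  simp only [Finset.mem_filter, Finset.mem_univ, true_and]
  exact (rr_eq_iff X j i).symm

end Lead

set_option maxHeartbeats 1000000 in
lemma small_count {F : Type*} [Field F] [Fintype F] [DecidableEq F] (n d : ℕ) (hd : 0 < d) :
    ((univ : Finset ((Fin n → F) × (Fin n → F))).filter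
      (fun XC => (univ.image XC.1).card ≤ d ∧
        ∀ i, ∑ j ∈ univ.filter (fun j => XC.1 j = XC.1 i), XC.2 j = 0)).card
    ≤ d ^ n * Fintype.card F ^ n := by
  classical
  have hcod : ((univ : Finset ((Fin n → Fin d) × (Fin n → F)))).card
      = d ^ n * Fintype.card F ^ n := by
    simp [Fintype.card_fun]
  rw [← hcod]
  have key := Finset.card_le_card_of_injOn (s := (univ : Finset ((Fin n → F) × (Fin n → F))).filter
      (fun XC => (univ.image XC.1).card ≤ d ∧
        ∀ i, ∑ j ∈ univ.filter (fun j => XC.1 j = XC.1 i), XC.2 j = 0))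
    (t := (univ : Finset ((Fin n → Fin d) × (Fin n → F))))
    (fun XC => ((fun i => if h : rr XC.1 i < d then (⟨rr XC.1 i, h⟩ : Fin d) else ⟨0, hd⟩),
      (fun i => if lead XC.1 i = i then XC.1 i else XC.2 i)))
  apply key
  · intro _ _; exact Finset.mem_univ _
  · rintro ⟨X, C⟩ hXC ⟨X', C'⟩ hXC' heq
    simp only [Finset.mem_coe, Finset.mem_filter, Finset.mem_univ, true_and] at hXC hXC'
    obtain ⟨hsmall, hbs⟩ := hXC
    obtain ⟨hsmall', hbs'⟩ := hXC'
    have hrrlt : ∀ i, rr X i < d := fun i => lt_of_lt_of_le (rr_lt_card_image X i) hsmall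
    have hrrlt' : ∀ i, rr X' i < d := fun i => lt_of_lt_of_le (rr_lt_card_image X' i) hsmall'
    have h1 := congrFun (congrArg Prod.fst heq)
    have h2 := congrFun (congrArg Prod.snd heq)
    simp only at h1 h2
    have hrr : ∀ i, rr X i = rr X' i := by
      intro i
      have := h1 i
      rw [dif_pos (hrrlt i), dif_pos (hrrlt' i)] at this
      exact congrArg Fin.val this
    have hlead : ∀ i, lead X i = lead X' i := by
      intro i
      rw [lead_eq_min'_rr X i, lead_eq_min'_rr X' i]
      congr 1
      ext j
      simp [hrr]
    have hXX' : X = X' := by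
      funext i
      have e1 : X i = (if lead X (lead X i) = lead X i then X (lead X i) else C (lead X i)) := by
        rw [if_pos (lead_lead X i)]; exact (X_lead X i).symm
      have e2 : X' i = (if lead X' (lead X' i) = lead X' i then X' (lead X' i) else C' (lead X' i)) := by
        rw [if_pos (lead_lead X' i)]; exact (X_lead X' i).symm
      rw [e1, e2, ← hlead i]
      exact h2 (lead X i)
    subst hXX'
    have hCnl : ∀ i, lead X i ≠ i → C i = C' i := by
      intro i hne
      have := h2 i
      rwa [if_neg hne, if_neg hne] at this
    have hC : C = C' := by
      funext i
      by_cases hl : lead X i = i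
      · have hb := hbs i
        have hb' := hbs' i
        have herase : ∀ j ∈ (univ.filter (fun j => X j = X i)).erase i, C j = C' j := by
          intro j hj
          obtain ⟨hjne, hjf⟩ := Finset.mem_erase.mp hj
          have hXji : X j = X i := (Finset.mem_filter.mp hjf).2
          apply hCnl
          rw [lead_congr X hXji, hl]
          exact hjne.symm
        have hi_mem : i ∈ univ.filter (fun j => X j = X i) := by simp
        have hs := Finset.add_sum_erase _ C hi_mem
        have hs' := Finset.add_sum_erase _ C' hi_mem
        rw [hb] at hs
        rw [hb'] at hs'
        have heq2 : C i + ∑ j ∈ (univ.filter (fun j => X j = X i)).erase i, C j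
            = C' i + ∑ j ∈ (univ.filter (fun j => X j = X i)).erase i, C' j := by
          rw [hs, hs']
        rwa [Finset.sum_congr rfl herase, add_left_inj] at heq2
      · exact hCnl i hl
    rw [hC]

lemma blocksum_of_momzero {F : Type*} [Field F] [Fintype F] [DecidableEq F] {n d : ℕ}
    (X C : Fin n → F) (himg : (univ.image X).card ≤ d + 1)
    (hmom : ∀ j : Fin (d + 1), ∑ i, C i * X i ^ (j : ℕ) = 0) :
    ∀ i, ∑ j ∈ univ.filter (fun j => X j = X i), C j = 0 := by
  classical
  have key := vand_finset d (univ.image X) id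
    (fun v => ∑ j ∈ univ.filter (fun j => X j = v), C j) himg
    (Function.injective_id.injOn)
    (by
      intro jj
      have expand : ∀ v ∈ univ.image X,
          (∑ j ∈ univ.filter (fun j => X j = v), C j) * id v ^ (jj : ℕ)
          = ∑ j ∈ univ.filter (fun j => X j = v), C j * X j ^ (jj : ℕ) := by
        intro v _
        rw [Finset.sum_mul]
        apply Finset.sum_congr rfl
        intro j hj
        rw [(Finset.mem_filter.mp hj).2]
        rfl
      rw [Finset.sum_congr rfl expand,
        Finset.sum_fiberwise_of_maps_to (fun x _ => Finset.mem_image_of_mem X (Finset.mem_univ x))]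
      exact hmom jj)
  intro i
  exact key (X i) (Finset.mem_image_of_mem X (Finset.mem_univ i))

lemma exists_injOn_erase {F : Type*} [DecidableEq F] {n : ℕ} (hn : 0 < n) (X : Fin n → F)
    (himg : n - 1 ≤ (univ.image X).card) :
    ∃ i₀ : Fin n, Set.InjOn X ↑(univ.erase i₀) := by
  classical
  by_cases hinj : Function.Injective X
  · exact ⟨⟨0, hn⟩, fun u _ v _ h => hinj h⟩
  · rw [Function.not_injective_iff] at hinj
    obtain ⟨a, b, hab, hne⟩ := hinj
    refine ⟨a, ?_⟩
    intro u hu v hv huv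
    by_contra huvne
    simp only [Finset.coe_erase, Set.mem_diff, Set.mem_singleton_iff] at hu hv
    have hsub : univ.image X ⊆ ((univ.erase a).erase u).image X := by
      intro w hw
      obtain ⟨m, _, hm⟩ := Finset.mem_image.mp hw
      by_cases hmu : m = u
      · refine Finset.mem_image.mpr ⟨v, ?_, ?_⟩
        · simp [Finset.mem_erase, Ne.symm huvne, hv.2]
        · rw [← huv, ← hmu, hm]
      · by_cases hma : m = a
        · by_cases hbu : b = u
          · refine Finset.mem_image.mpr ⟨v, ?_, ?_⟩
            · simp [Finset.mem_erase, Ne.symm huvne, hv.2]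
            · rw [← huv, ← hbu, ← hab, ← hma, hm]
          · refine Finset.mem_image.mpr ⟨b, ?_, ?_⟩
            · simp [Finset.mem_erase, hbu, Ne.symm hne]
            · rw [← hab, ← hma, hm]
        · exact Finset.mem_image.mpr ⟨m, by simp [Finset.mem_erase, hmu, hma], hm⟩
    have hcard : (univ.image X).card ≤ n - 2 := by
      calc (univ.image X).card ≤ (((univ.erase a).erase u).image X).card :=
            Finset.card_le_card hsub
        _ ≤ ((univ.erase a).erase u).card := Finset.card_image_le
        _ ≤ n - 2 := by
          rw [Finset.card_erase_of_mem (by simp [Finset.mem_erase, hu.2]),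
            Finset.card_erase_of_mem (Finset.mem_univ a)]
          simp only [Finset.card_univ, Fintype.card_fin]
          omega
    have hn2 : 2 ≤ n := by
      have : Nontrivial (Fin n) := ⟨⟨u, v, huvne⟩⟩
      have := Fintype.one_lt_card (α := Fin n)
      simp at this
      omega
    omega

lemma big_count {F : Type*} [Field F] [Fintype F] [DecidableEq F] (n d : ℕ) (hn : n = d + 2) :
    ((univ : Finset ((Fin n → F) × (Fin n → F))).filter
      (fun XC => d + 1 ≤ (univ.image XC.1).card ∧
        ∀ j : Fin (d + 1), ∑ i, XC.2 i * XC.1 i ^ (j : ℕ) = 0)).card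
    ≤ Fintype.card F ^ n * Fintype.card F := by
  classical
  have hnpos : 0 < n := by omega
  set pick : (Fin n → F) → Fin n := fun X =>
    if h : ∃ i₀ : Fin n, Set.InjOn X ↑(univ.erase i₀) then h.choose else ⟨0, hnpos⟩ with hpick
  have pick_spec : ∀ X : Fin n → F, d + 1 ≤ (univ.image X).card →
      Set.InjOn X ↑(univ.erase (pick X)) := by
    intro X hX
    have hex : ∃ i₀ : Fin n, Set.InjOn X ↑(univ.erase i₀) :=
      exists_injOn_erase hnpos X (by omega)
    rw [hpick]
    simp only [dif_pos hex]
    exact hex.choose_spec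
  have hcod : ((univ : Finset ((Fin n → F) × F))).card
      = Fintype.card F ^ n * Fintype.card F := by
    simp [Fintype.card_fun]
  rw [← hcod]
  have key := Finset.card_le_card_of_injOn
    (s := (univ : Finset ((Fin n → F) × (Fin n → F))).filter
      (fun XC => d + 1 ≤ (univ.image XC.1).card ∧
        ∀ j : Fin (d + 1), ∑ i, XC.2 i * XC.1 i ^ (j : ℕ) = 0))
    (t := (univ : Finset ((Fin n → F) × F)))
    (fun XC => (XC.1, XC.2 (pick XC.1)))
  apply key
  · intro _ _; exact Finset.mem_univ _
  · rintro ⟨X, C⟩ hXC ⟨X', C'⟩ hXC' heq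
    simp only [Finset.mem_coe, Finset.mem_filter, Finset.mem_univ, true_and] at hXC hXC'
    obtain ⟨hbig, hmom⟩ := hXC
    obtain ⟨hbig', hmom'⟩ := hXC'
    have hX : X = X' := congrArg Prod.fst heq
    subst hX
    have hCp : C (pick X) = C' (pick X) := congrArg Prod.snd heq
    have hvan := vand_finset d (univ.erase (pick X)) X (fun i => C i - C' i)
      (by rw [Finset.card_erase_of_mem (Finset.mem_univ _)]; simp [hn])
      (pick_spec X hbig)
      (by
        intro j
        have hfull : ∑ i, (C i - C' i) * X i ^ (j : ℕ) = 0 := by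
          have : ∑ i, (C i - C' i) * X i ^ (j : ℕ)
              = (∑ i, C i * X i ^ (j : ℕ)) - ∑ i, C' i * X i ^ (j : ℕ) := by
            rw [← Finset.sum_sub_distrib]
            apply Finset.sum_congr rfl
            intro i _
            ring
          rw [this, hmom j, hmom' j, sub_zero]
        have hsplit := Finset.add_sum_erase univ (fun i => (C i - C' i) * X i ^ (j : ℕ))
          (Finset.mem_univ (pick X))
        rw [hfull] at hsplit
        have hz : (C (pick X) - C' (pick X)) * X (pick X) ^ (j : ℕ) = 0 := by
          rw [hCp, sub_self, zero_mul]
        rw [hz, zero_add] at hsplit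
        simpa using hsplit)
    have hC : C = C' := by
      funext i
      by_cases hi : i = pick X
      · rw [hi]; exact hCp
      · have := hvan i (by simp [Finset.mem_erase, hi])
        exact sub_eq_zero.mp this
    rw [hC]

lemma T_bound {F : Type*} [Field F] [Fintype F] [DecidableEq F] (d : ℕ) (hd : 0 < d) :
    ((univ : Finset ((Fin (d + 2) → F) × (Fin (d + 2) → F))).filter
      (fun XC => ∀ j : Fin (d + 1), ∑ i, XC.2 i * XC.1 i ^ (j : ℕ) = 0)).card
    ≤ Fintype.card F ^ (d + 3) + d ^ (d + 2) * Fintype.card F ^ (d + 2) := by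
  classical
  have hsplit := Finset.card_filter_add_card_filter_not
    (s := (univ : Finset ((Fin (d + 2) → F) × (Fin (d + 2) → F))).filter
      (fun XC => ∀ j : Fin (d + 1), ∑ i, XC.2 i * XC.1 i ^ (j : ℕ) = 0))
    (p := fun XC => d + 1 ≤ (univ.image XC.1).card)
  refine le_trans (le_of_eq hsplit.symm) (add_le_add ?h1 ?h2)
  · calc _ ≤ ((univ : Finset ((Fin (d + 2) → F) × (Fin (d + 2) → F))).filter
            (fun XC => d + 1 ≤ (univ.image XC.1).card ∧
              ∀ j : Fin (d + 1), ∑ i, XC.2 i * XC.1 i ^ (j : ℕ) = 0)).card := by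
          apply Finset.card_le_card
          intro a ha
          simp only [Finset.mem_filter, Finset.mem_univ, true_and] at ha ⊢
          exact ⟨ha.2, ha.1⟩
      _ ≤ Fintype.card F ^ (d + 2) * Fintype.card F := big_count (d + 2) d rfl
      _ = Fintype.card F ^ (d + 3) := by rw [← pow_succ]
  · calc _ ≤ ((univ : Finset ((Fin (d + 2) → F) × (Fin (d + 2) → F))).filter
            (fun XC => (univ.image XC.1).card ≤ d ∧
              ∀ i, ∑ j ∈ univ.filter (fun j => XC.1 j = XC.1 i), XC.2 j = 0)).card := by
          apply Finset.card_le_card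
          intro a ha
          simp only [Finset.mem_filter, Finset.mem_univ, true_and, not_le] at ha ⊢
          obtain ⟨hmom, hnq⟩ := ha
          have himg : (univ.image a.1).card ≤ d := by omega
          exact ⟨himg, blocksum_of_momzero a.1 a.2 (by omega) hmom⟩
      _ ≤ d ^ (d + 2) * Fintype.card F ^ (d + 2) := small_count (d + 2) d hd

def pairEquiv (F : Type*) [Ring F] {k m : ℕ} (e0 : (Fin k ⊕ Fin k) ≃ Fin m) :
    (((Fin k → F) × (Fin k → F)) × ((Fin k → F) × (Fin k → F))) ≃
      ((Fin m → F) × (Fin m → F)) where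
  toFun pp := (fun idx => Sum.elim pp.1.1 pp.2.1 (e0.symm idx),
    fun idx => Sum.elim pp.1.2 (fun t => -(pp.2.2 t)) (e0.symm idx))
  invFun XC := ((fun a => XC.1 (e0 (Sum.inl a)), fun a => XC.2 (e0 (Sum.inl a))),
    (fun b => XC.1 (e0 (Sum.inr b)), fun b => -(XC.2 (e0 (Sum.inr b)))))
  left_inv pp := by
    refine Prod.ext (Prod.ext ?_ ?_) (Prod.ext ?_ ?_) <;> funext a <;> simp
  right_inv XC := by
    have key : ∀ idx, e0 (e0.symm idx) = idx := fun idx => e0.apply_symm_apply idx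
    refine Prod.ext ?_ ?_ <;> funext idx
    · show Sum.elim _ _ (e0.symm idx) = XC.1 idx
      rcases hs : e0.symm idx with a | b
      · simp only [Sum.elim_inl]; rw [← hs, key]
      · simp only [Sum.elim_inr]; rw [← hs, key]
    · show Sum.elim _ _ (e0.symm idx) = XC.2 idx
      rcases hs : e0.symm idx with a | b
      · simp only [Sum.elim_inl]; rw [← hs, key]
      · simp only [Sum.elim_inr, neg_neg]; rw [← hs, key]

lemma pairEquiv_snd_mul_fst_pow (F : Type*) [Ring F] {k m : ℕ}
    (e0 : (Fin k ⊕ Fin k) ≃ Fin m)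
    (pp : ((Fin k → F) × (Fin k → F)) × ((Fin k → F) × (Fin k → F))) (j : ℕ) :
    ∑ idx : Fin m, (pairEquiv F e0 pp).2 idx * (pairEquiv F e0 pp).1 idx ^ j
      = (∑ i, pp.1.2 i * pp.1.1 i ^ j) - ∑ i, pp.2.2 i * pp.2.1 i ^ j := by
  rw [← Equiv.sum_comp e0
    (fun idx => (pairEquiv F e0 pp).2 idx * (pairEquiv F e0 pp).1 idx ^ j)]
  simp only [pairEquiv, Equiv.coe_fn_mk, Equiv.symm_apply_apply]
  rw [Fintype.sum_sum_type]
  simp only [Sum.elim_inl, Sum.elim_inr]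
  rw [sub_eq_add_neg, ← Finset.sum_neg_distrib]
  congr 1
  apply Finset.sum_congr rfl
  intro b _
  rw [neg_mul]

/-- Let `q` be a prime power (`F` the finite field with `q` elements),
`d` an even positive integer, `k = d/2 + 1`, and `α > 0` a real number.  Then
`α² · |{z ∈ F_q^{d+1} : |Z⁻¹(z)| ≤ q - α √q d^k}| ≤ q^{d+1}`, where the inner
inequality is read in the real numbers. -/
theorem stmt_18 (F : Type*) [Field F] [Fintype F] (d k : ℕ)
    (hd : Even d) (hdpos : 0 < d) (hk : k = d / 2 + 1)
    (α : ℝ) (hα : 0 < α) :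
    α ^ 2 *
      (Set.ncard {z : Fin (d + 1) → F |
        (Nat.card {xy : (Fin k → F) × (Fin k → F) //
            (fun j : Fin (d + 1) => ∑ i, xy.2 i * xy.1 i ^ (j : ℕ)) = z} : ℝ) ≤
          (Fintype.card F : ℝ) - α * Real.sqrt (Fintype.card F) * (d : ℝ) ^ k} : ℝ) ≤
      (Fintype.card F : ℝ) ^ (d + 1) := by
  classical
  have hqpos : 0 < Fintype.card F := Fintype.card_pos
  have h2k : k + k = d + 2 := by
    obtain ⟨m, hm⟩ := hd
    omega
  set q := Fintype.card F with hq
  set Zm : ((Fin k → F) × (Fin k → F)) → (Fin (d + 1) → F) :=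
    fun xy => fun j => ∑ i, xy.2 i * xy.1 i ^ (j : ℕ) with hZm
  set N : (Fin (d + 1) → F) → ℕ :=
    fun z => (univ.filter (fun p => Zm p = z)).card with hN
  -- Step A : identify the ncard with a filter card
  have hNcard : ∀ z : Fin (d + 1) → F,
      Nat.card {xy : (Fin k → F) × (Fin k → F) //
        (fun j : Fin (d + 1) => ∑ i, xy.2 i * xy.1 i ^ (j : ℕ)) = z} = N z := by
    intro z
    rw [Nat.card_eq_fintype_card, hN]
    simp only [hZm]
    convert Fintype.card_subtype _ using 2
  have hncard : {z : Fin (d + 1) → F |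
      (Nat.card {xy : (Fin k → F) × (Fin k → F) //
          (fun j : Fin (d + 1) => ∑ i, xy.2 i * xy.1 i ^ (j : ℕ)) = z} : ℝ) ≤
        (q : ℝ) - α * Real.sqrt (q : ℕ) * (d : ℝ) ^ k}
      = ↑(univ.filter (fun z : Fin (d + 1) → F =>
          ((N z : ℝ) ≤ (q : ℝ) - α * Real.sqrt (q : ℕ) * (d : ℝ) ^ k))) := by
    ext z
    simp only [Set.mem_setOf_eq, Finset.coe_filter, Finset.mem_univ, true_and, hNcard z]
  rw [hncard, Set.ncard_coe_finset]
  set M := (univ.filter (fun z : Fin (d + 1) → F =>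
      ((N z : ℝ) ≤ (q : ℝ) - α * Real.sqrt (q : ℕ) * (d : ℝ) ^ k))).card with hM
  -- Step B : first moment
  have hsum1 : ∑ z : Fin (d + 1) → F, N z = q ^ (d + 2) := by
    have hfib := Finset.card_eq_sum_card_fiberwise
      (s := (univ : Finset ((Fin k → F) × (Fin k → F)))) (t := univ) (f := Zm)
      (fun x _ => Finset.mem_univ _)
    rw [Finset.card_univ, Fintype.card_prod, Fintype.card_fun, Fintype.card_fin] at hfib
    rw [← h2k, pow_add]
    rw [hfib]
  -- Step C : second moment as a pair count
  have hsum2 : ∑ z : Fin (d + 1) → F, N z * N z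
      = ((univ : Finset (((Fin k → F) × (Fin k → F)) × ((Fin k → F) × (Fin k → F)))).filter
          (fun pp => Zm pp.1 = Zm pp.2)).card := by
    have hfib := Finset.card_eq_sum_card_fiberwise
      (s := (univ : Finset (((Fin k → F) × (Fin k → F)) × ((Fin k → F) × (Fin k → F)))).filter
        (fun pp => Zm pp.1 = Zm pp.2))
      (t := univ) (f := fun pp => Zm pp.1) (fun x _ => Finset.mem_univ _)
    rw [hfib]
    apply Finset.sum_congr rfl
    intro z _
    have hset : ((univ : Finset (((Fin k → F) × (Fin k → F)) × ((Fin k → F) × (Fin k → F)))).filter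
          (fun pp => Zm pp.1 = Zm pp.2)).filter (fun pp => Zm pp.1 = z)
        = (univ.filter (fun p => Zm p = z)) ×ˢ (univ.filter (fun p => Zm p = z)) := by
      ext pp
      simp only [Finset.mem_filter, Finset.mem_univ, true_and, Finset.mem_product]
      constructor
      · rintro ⟨heq, h1⟩
        exact ⟨h1, heq ▸ h1⟩
      · rintro ⟨h1, h2⟩
        exact ⟨h1.trans h2.symm, h1⟩
    rw [hset, Finset.card_product]
  -- Step D : transport the pair count to the moment-zero count
  have e0 : (Fin k ⊕ Fin k) ≃ Fin (d + 2) := finSumFinEquiv.trans (finCongr h2k)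
  have hpair : (((univ : Finset (((Fin k → F) × (Fin k → F)) × ((Fin k → F) × (Fin k → F)))).filter
        (fun pp => Zm pp.1 = Zm pp.2)).card : ℕ)
      = ((univ : Finset ((Fin (d + 2) → F) × (Fin (d + 2) → F))).filter
        (fun XC => ∀ j : Fin (d + 1), ∑ i, XC.2 i * XC.1 i ^ (j : ℕ) = 0)).card := by
    apply Finset.card_equiv (pairEquiv F e0)
    intro pp
    simp only [Finset.mem_filter, Finset.mem_univ, true_and]
    constructor
    · intro heq j
      rw [pairEquiv_snd_mul_fst_pow]
      have := congrFun heq j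
      simp only [hZm] at this
      rw [this, sub_self]
    · intro hz
      funext j
      have := hz j
      rw [pairEquiv_snd_mul_fst_pow] at this
      simp only [hZm]
      exact sub_eq_zero.mp this
  -- Step E : the numeric bound on the second moment
  have hsum2le : ∑ z : Fin (d + 1) → F, N z * N z
      ≤ q ^ (d + 3) + d ^ (d + 2) * q ^ (d + 2) := by
    rw [hsum2, hpair]
    exact T_bound (F := F) d hdpos
  -- Step F : Chebyshev-style real arithmetic
  have hqR : (0:ℝ) < (q:ℝ) := by exact_mod_cast hqpos
  have hdR : (0:ℝ) < (d:ℝ) := by exact_mod_cast hdpos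
  have hsq : Real.sqrt (q:ℕ) * Real.sqrt (q:ℕ) = (q:ℝ) := Real.mul_self_sqrt (le_of_lt hqR)
  have hd2k : (d:ℝ)^k * (d:ℝ)^k = (d:ℝ)^(d+2) := by rw [← pow_add, h2k]
  have hcardz : (Fintype.card (Fin (d + 1) → F)) = q ^ (d+1) := by
    rw [Fintype.card_fun, Fintype.card_fin]
  -- pointwise bound on the chosen set
  have key : ∀ z ∈ (univ.filter (fun z : Fin (d + 1) → F =>
      ((N z : ℝ) ≤ (q : ℝ) - α * Real.sqrt (q : ℕ) * (d : ℝ) ^ k))),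
      α^2 * (q:ℝ) * (d:ℝ)^(d+2) ≤ ((q:ℝ) - (N z : ℝ))^2 := by
    intro z hz
    have hNz : (N z : ℝ) ≤ (q : ℝ) - α * Real.sqrt (q:ℕ) * (d : ℝ) ^ k :=
      (Finset.mem_filter.mp hz).2
    have h1 : α * Real.sqrt (q:ℕ) * (d:ℝ)^k ≤ (q:ℝ) - (N z : ℝ) := by linarith
    have h0 : 0 ≤ α * Real.sqrt (q:ℕ) * (d:ℝ)^k := by positivity
    have hsqr : (α * Real.sqrt (q:ℕ) * (d:ℝ)^k)^2 = α^2 * (q:ℝ) * (d:ℝ)^(d+2) := by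
      have : (α * Real.sqrt (q:ℕ) * (d:ℝ)^k)^2
          = α^2 * (Real.sqrt (q:ℕ) * Real.sqrt (q:ℕ)) * ((d:ℝ)^k * (d:ℝ)^k) := by ring
      rw [this, hsq, hd2k]
    calc α^2 * (q:ℝ) * (d:ℝ)^(d+2) = (α * Real.sqrt (q:ℕ) * (d:ℝ)^k)^2 := hsqr.symm
      _ ≤ ((q:ℝ) - (N z : ℝ))^2 := by
          apply pow_le_pow_left₀ h0 h1
  have hMsum : (M:ℝ) * (α^2 * (q:ℝ) * (d:ℝ)^(d+2))
      ≤ ∑ z ∈ (univ.filter (fun z : Fin (d + 1) → F =>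
        ((N z : ℝ) ≤ (q : ℝ) - α * Real.sqrt (q : ℕ) * (d : ℝ) ^ k))),
          ((q:ℝ) - (N z : ℝ))^2 := by
    have := Finset.card_nsmul_le_sum
      (univ.filter (fun z : Fin (d + 1) → F =>
        ((N z : ℝ) ≤ (q : ℝ) - α * Real.sqrt (q : ℕ) * (d : ℝ) ^ k)))
      (fun z => ((q:ℝ) - (N z : ℝ))^2) (α^2 * (q:ℝ) * (d:ℝ)^(d+2)) key
    rw [nsmul_eq_mul] at this
    exact this
  have hext : ∑ z ∈ (univ.filter (fun z : Fin (d + 1) → F =>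
        ((N z : ℝ) ≤ (q : ℝ) - α * Real.sqrt (q : ℕ) * (d : ℝ) ^ k))),
          ((q:ℝ) - (N z : ℝ))^2
      ≤ ∑ z : Fin (d + 1) → F, ((q:ℝ) - (N z : ℝ))^2 :=
    Finset.sum_le_sum_of_subset_of_nonneg (Finset.subset_univ _)
      (fun z _ _ => sq_nonneg _)
  have htotal : ∑ z : Fin (d + 1) → F, ((q:ℝ) - (N z : ℝ))^2
      ≤ (d:ℝ)^(d+2) * (q:ℝ)^(d+2) := by
    have hexp : ∑ z : Fin (d + 1) → F, ((q:ℝ) - (N z : ℝ))^2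
        = (q:ℝ)^(d+1) * (q:ℝ)^2 - 2*(q:ℝ)*(∑ z : Fin (d + 1) → F, (N z : ℝ))
          + ∑ z : Fin (d + 1) → F, (N z : ℝ)*(N z : ℝ) := by
      have hterm : ∀ z : Fin (d + 1) → F, ((q:ℝ) - (N z : ℝ))^2
          = (q:ℝ)^2 - 2*(q:ℝ)*(N z : ℝ) + (N z : ℝ)*(N z : ℝ) := by
        intro z; ring
      rw [Finset.sum_congr rfl (fun z _ => hterm z), Finset.sum_add_distrib,
        Finset.sum_sub_distrib, ← Finset.mul_sum, Finset.sum_const, Finset.card_univ,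
        hcardz, nsmul_eq_mul]
      push_cast
      ring
    have hc1 : (∑ z : Fin (d + 1) → F, (N z : ℝ)) = (q:ℝ)^(d+2) := by
      rw [← Nat.cast_sum, hsum1]
      push_cast
      ring
    have hc2 : (∑ z : Fin (d + 1) → F, (N z : ℝ)*(N z : ℝ))
        ≤ (q:ℝ)^(d+3) + (d:ℝ)^(d+2) * (q:ℝ)^(d+2) := by
      have hcast : (∑ z : Fin (d + 1) → F, (N z : ℝ)*(N z : ℝ))
          = ((∑ z : Fin (d + 1) → F, N z * N z : ℕ) : ℝ) := by
        push_cast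
        rfl
      rw [hcast]
      exact_mod_cast hsum2le
    rw [hexp, hc1]
    have hq3 : (q:ℝ)^(d+1) * (q:ℝ)^2 = (q:ℝ)^(d+3) := by
      rw [← pow_add]
    have hq2 : 2*(q:ℝ)*(q:ℝ)^(d+2) = 2*(q:ℝ)^(d+3) := by
      rw [show d+3 = (d+2)+1 by omega, pow_succ]
      ring
    rw [hq3, hq2]
    linarith
  have hfinal : (α^2 * (M:ℝ)) * ((q:ℝ) * (d:ℝ)^(d+2))
      ≤ (q:ℝ)^(d+1) * ((q:ℝ) * (d:ℝ)^(d+2)) := by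
    calc (α^2 * (M:ℝ)) * ((q:ℝ) * (d:ℝ)^(d+2))
        = (M:ℝ) * (α^2 * (q:ℝ) * (d:ℝ)^(d+2)) := by ring
      _ ≤ (d:ℝ)^(d+2) * (q:ℝ)^(d+2) := le_trans hMsum (le_trans hext htotal)
      _ = (q:ℝ)^(d+1) * ((q:ℝ) * (d:ℝ)^(d+2)) := by
          rw [show d+2 = (d+1)+1 by omega, pow_succ ((q:ℝ))]
          ring
  have hpos : (0:ℝ) < (q:ℝ) * (d:ℝ)^(d+2) := by positivity
  exact le_of_mul_le_mul_right hfinal hpos
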